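/- Let A and B be algebras with Con(A × B) modular. If α is a dense congruence on A, then α × 1_B is a dense congruence on A × B. -/
import Mathlib


/-- An algebraic signature: a type of operation symbols with finite arities. -/
structure Signature where
  ops : Type
  arity : ops → ℕ

/-- An algebra for a signature. -/
structure SAlgebra (S : Signature) where
  carrier : Type
  interp : (o : S.ops) → (Fin (S.arity o) → carrier) → carrier

namespace SAlgebra

variable {S : Signature}

/-- Binary product of algebras. -/
def prod (A B : SAlgebra S) : SAlgebra S where
  carrier := A.carrier × B.carrier
  interp o x := (A.interp o fun i => (x i).1, B.interp o fun i => (x i).2)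

/-- Product of a family of algebras. -/
def pi {ι : Type} (A : ι → SAlgebra S) : SAlgebra S where
  carrier := ∀ i, (A i).carrier
  interp o x i := (A i).interp o fun j => x j i

end SAlgebra

/-- Homomorphisms of algebras. -/
structure SHom {S : Signature} (A B : SAlgebra S) where
  toFun : A.carrier → B.carrier
  map : ∀ (o : S.ops) (x : Fin (S.arity o) → A.carrier),
    toFun (A.interp o x) = B.interp o fun i => toFun (x i)

namespace SHom

variable {S : Signature}

/-- Composition of homomorphisms. -/
def comp {A B C : SAlgebra S} (g : SHom B C) (f : SHom A B) : SHom A C where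
  toFun := g.toFun ∘ f.toFun
  map o x := by simp [Function.comp, f.map, g.map]

/-- The `i`-th projection of a product. -/
def proj {ι : Type} (A : ι → SAlgebra S) (i : ι) : SHom (SAlgebra.pi A) (A i) where
  toFun x := x i
  map _ _ := rfl

end SHom

/-- Congruences of an algebra. -/
structure SCon {S : Signature} (A : SAlgebra S) where
  r : A.carrier → A.carrier → Prop
  iseqv : Equivalence r
  compat : ∀ (o : S.ops) (x y : Fin (S.arity o) → A.carrier),
    (∀ i, r (x i) (y i)) → r (A.interp o x) (A.interp o y)

namespace SCon

variable {S : Signature} {A : SAlgebra S}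

instance : PartialOrder (SCon A) where
  le c d := ∀ x y, c.r x y → d.r x y
  le_refl _ _ _ h := h
  le_trans _ _ _ h h' x y hx := h' x y (h x y hx)
  le_antisymm a b h h' := by
    cases a; cases b
    have : ∀ x y : A.carrier, _ ↔ _ := fun x y => Iff.intro (h x y) (h' x y)
    simp only [SCon.mk.injEq]
    funext x y
    exact propext (this x y)

instance : InfSet (SCon A) :=
  ⟨fun s =>
    { r := fun x y => ∀ c ∈ s, c.r x y
      iseqv := ⟨fun x c _ => c.iseqv.refl x, fun h c hc => c.iseqv.symm (h c hc),
        fun h1 h2 c hc => c.iseqv.trans (h1 c hc) (h2 c hc)⟩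
      compat := fun o x y h c hc => c.compat o x y fun i => h i c hc }⟩

instance : CompleteLattice (SCon A) :=
  completeLatticeOfInf _ (fun s =>
    ⟨fun c hc x y h => h c hc, fun b hb x y h c hc => hb hc x y h⟩)

/-- Restriction (inverse image) of a congruence along a homomorphism. -/
def comap {B : SAlgebra S} (f : SHom A B) (θ : SCon B) : SCon A where
  r x y := θ.r (f.toFun x) (f.toFun y)
  iseqv := ⟨fun _ => θ.iseqv.refl _, θ.iseqv.symm, θ.iseqv.trans⟩
  compat o x y h := by
    show θ.r (f.toFun (A.interp o x)) (f.toFun (A.interp o y))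
    rw [f.map, f.map]
    exact θ.compat o _ _ h

/-- Product of two congruences. -/
def prodCon {A B : SAlgebra S} (φ : SCon A) (ψ : SCon B) : SCon (A.prod B) where
  r x y := φ.r x.1 y.1 ∧ ψ.r x.2 y.2
  iseqv := ⟨fun _ => ⟨φ.iseqv.refl _, ψ.iseqv.refl _⟩,
    fun h => ⟨φ.iseqv.symm h.1, ψ.iseqv.symm h.2⟩,
    fun h h' => ⟨φ.iseqv.trans h.1 h'.1, ψ.iseqv.trans h.2 h'.2⟩⟩
  compat o x y h := ⟨φ.compat o _ _ fun i => (h i).1, ψ.compat o _ _ fun i => (h i).2⟩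

/-- Product of a family of congruences. -/
def piCon {ι : Type} {A : ι → SAlgebra S} (φ : ∀ i, SCon (A i)) : SCon (SAlgebra.pi A) where
  r x y := ∀ i, (φ i).r (x i) (y i)
  iseqv := ⟨fun _ i => (φ i).iseqv.refl _, fun h i => (φ i).iseqv.symm (h i),
    fun h h' i => (φ i).iseqv.trans (h i) (h' i)⟩
  compat o x y h i := (φ i).compat o _ _ fun j => h j i

end SCon

/-- Terms in `n` variables over a signature. -/
inductive STerm (S : Signature) : ℕ → Type where
  | var : {n : ℕ} → Fin n → STerm S n
  | app : {n : ℕ} → (o : S.ops) → (Fin (S.arity o) → STerm S n) → STerm S n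

/-- Evaluation of a term in an algebra. -/
def STerm.eval {S : Signature} (A : SAlgebra S) {n : ℕ} : STerm S n → (Fin n → A.carrier) → A.carrier
  | .var i, x => x i
  | .app o t, x => A.interp o fun j => (t j).eval A x

/-- The term-condition centralizer relation `C(α, β; δ)`. -/
def Centralizes {S : Signature} (A : SAlgebra S) (α β δ : SCon A) : Prop :=
  ∀ (n m : ℕ) (t : STerm S (n + m)) (a b : Fin n → A.carrier) (u v : Fin m → A.carrier),
    (∀ i, α.r (a i) (b i)) → (∀ j, β.r (u j) (v j)) →
    δ.r (t.eval A (Fin.append a u)) (t.eval A (Fin.append a v)) →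
    δ.r (t.eval A (Fin.append b u)) (t.eval A (Fin.append b v))

/-- The commutator `[α, β]`: the least congruence `δ` with `C(α, β; δ)`. -/
def conCommutator {S : Signature} (A : SAlgebra S) (α β : SCon A) : SCon A :=
  sInf {δ | Centralizes A α β δ}

/-- The center of an algebra: the largest central congruence. -/
def conCenter {S : Signature} (A : SAlgebra S) : SCon A :=
  sSup {θ | conCommutator A θ ⊤ = ⊥}

/-- A class of algebras is a variety iff it is closed under subalgebras
(isomorphic copies included), homomorphic images and products. -/
def IsVariety {S : Signature} (V : SAlgebra S → Prop) : Prop :=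
  (∀ (A B : SAlgebra S) (e : SHom A B), Function.Injective e.toFun → V B → V A) ∧
  (∀ (A B : SAlgebra S) (p : SHom A B), Function.Surjective p.toFun → V A → V B) ∧
  (∀ (ι : Type) (A : ι → SAlgebra S), (∀ i, V (A i)) → V (SAlgebra.pi A))

/-- A congruence modular variety. -/
def IsCongruenceModularVariety {S : Signature} (V : SAlgebra S → Prop) : Prop :=
  IsVariety V ∧ ∀ A : SAlgebra S, V A → IsModularLattice (SCon A)

/-- A Gumm difference term for the class `V`:  `d(x,y,y) = x` holds identically,
and `d(x,x,y) = y` whenever `x θ y` for an abelian congruence `θ`. -/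
def IsGummDifferenceTerm {S : Signature} (V : SAlgebra S → Prop) (d : STerm S 3) : Prop :=
  (∀ A : SAlgebra S, V A → ∀ x y : A.carrier, d.eval A ![x, y, y] = x) ∧
  (∀ A : SAlgebra S, V A → ∀ θ : SCon A, conCommutator A θ θ = ⊥ →
    ∀ x y : A.carrier, θ.r x y → d.eval A ![x, x, y] = y)

/-- `R` is an absolute retract in `V`: every embedding of `R` into a member of `V`
admits a retraction. -/
def IsAbsoluteRetract {S : Signature} (V : SAlgebra S → Prop) (R : SAlgebra S) : Prop :=
  ∀ A : SAlgebra S, V A → ∀ e : SHom R A, Function.Injective e.toFun →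
    ∃ p : SHom A R, ∀ x, p.toFun (e.toFun x) = x

/-- An embedding is essential iff every congruence of the codomain restricting
trivially is trivial. -/
def IsEssential {S : Signature} {A B : SAlgebra S} (e : SHom A B) : Prop :=
  ∀ θ : SCon B, SCon.comap e θ = ⊥ → θ = ⊥

/-- A congruence `α` is dense: any congruence meeting it trivially is trivial. -/
def DenseCon {S : Signature} {A : SAlgebra S} (α : SCon A) : Prop :=
  ∀ θ : SCon A, θ ⊓ α = ⊥ → θ = ⊥

/-- The setoid underlying a congruence. -/
def SCon.setoid {S : Signature} {A : SAlgebra S} (θ : SCon A) : Setoid A.carrier :=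
  ⟨θ.r, θ.iseqv⟩

/-- Quotient algebra. -/
noncomputable def SAlgebra.quot {S : Signature} (A : SAlgebra S) (θ : SCon A) : SAlgebra S where
  carrier := Quotient θ.setoid
  interp o x := Quotient.mk θ.setoid (A.interp o fun i => (x i).out)

theorem SCon.out_rel {S : Signature} {A : SAlgebra S} (θ : SCon A) (a : A.carrier) :
    θ.r (Quotient.out (Quotient.mk θ.setoid a)) a :=
  @Quotient.exact _ θ.setoid _ _ (Quotient.out_eq _)

/-- The canonical quotient homomorphism. -/
def SHom.quotHom {S : Signature} (A : SAlgebra S) (θ : SCon A) : SHom A (A.quot θ) where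
  toFun := Quotient.mk θ.setoid
  map o x := Quotient.sound (θ.compat o _ _ fun i => θ.iseqv.symm (θ.out_rel (x i)))

/-- Product map of a family of homomorphisms. -/
def SHom.piMap {S : Signature} {ι : Type} {A B : ι → SAlgebra S} (f : ∀ i, SHom (A i) (B i)) :
    SHom (SAlgebra.pi A) (SAlgebra.pi B) where
  toFun x i := (f i).toFun (x i)
  map o x := funext fun i => (f i).map o fun j => x j i

/-- The congruence `φ/θ` on the quotient `A/θ`, for `θ ≤ φ`. -/
def SCon.quotCon {S : Signature} {A : SAlgebra S} (θ φ : SCon A) (h : θ ≤ φ) :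
    SCon (A.quot θ) where
  r a b := φ.r a.out b.out
  iseqv := ⟨fun _ => φ.iseqv.refl _, φ.iseqv.symm, φ.iseqv.trans⟩
  compat o x y hxy := by
    have hx := h _ _ (θ.out_rel (A.interp o fun i => (x i).out))
    have hy := h _ _ (θ.out_rel (A.interp o fun i => (y i).out))
    exact φ.iseqv.trans hx (φ.iseqv.trans (φ.compat o _ _ hxy) (φ.iseqv.symm hy))

/-- Finitely subdirectly irreducible: `⊥` is meet irreducible in the congruence lattice. -/
def IsFSI {S : Signature} (A : SAlgebra S) : Prop :=
  ∀ θ φ : SCon A, θ ⊓ φ = ⊥ → θ = ⊥ ∨ φ = ⊥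

/-- Subdirectly irreducible: the congruence lattice has a monolith. -/
def IsSubdirectlyIrreducible {S : Signature} (A : SAlgebra S) : Prop :=
  ∃ μ : SCon A, μ ≠ ⊥ ∧ ∀ θ : SCon A, θ ≠ ⊥ → μ ≤ θ

def SCon.eqCon {S : Signature} (A : SAlgebra S) : SCon A where
  r := Eq
  iseqv := eq_equivalence
  compat o x y h := by rw [funext h]

theorem SCon.bot_r_iff {S : Signature} {A : SAlgebra S} {x y : A.carrier} :
    (⊥ : SCon A).r x y ↔ x = y :=
  ⟨fun h => (bot_le : (⊥ : SCon A) ≤ SCon.eqCon A) x y h,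
   fun h => h ▸ (⊥ : SCon A).iseqv.refl x⟩

def SCon.allCon {S : Signature} (A : SAlgebra S) : SCon A where
  r _ _ := True
  iseqv := ⟨fun _ => trivial, fun _ => trivial, fun _ _ => trivial⟩
  compat _ _ _ _ := trivial

theorem SCon.top_r {S : Signature} {A : SAlgebra S} (x y : A.carrier) :
    (⊤ : SCon A).r x y :=
  (le_top : SCon.allCon A ≤ ⊤) x y trivial

theorem SCon.inf_r {S : Signature} {A : SAlgebra S} (a b : SCon A) (x y : A.carrier) :
    (a ⊓ b).r x y ↔ a.r x y ∧ b.r x y := by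
  constructor
  · intro h
    exact ⟨h a (by simp), h b (by simp)⟩
  · rintro ⟨h1, h2⟩ c hc
    rcases hc with rfl | rfl
    · exact h1
    · exact h2

/-- If `Con(A × B)` is modular and `α` is a dense congruence on `A`, then `α × 1_B`
is a dense congruence on `A × B`. -/
theorem prod_top_dense {S : Signature} (A B : SAlgebra S)
    (hmod : IsModularLattice (SCon (A.prod B)))
    (α : SCon A) (hα : DenseCon α) :
    DenseCon (SCon.prodCon α (⊤ : SCon B)) := by
  intro θ hθ
  by_cases hB : Nonempty B.carrier
  · -- the equality congruence, to identify ⊥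
    obtain ⟨b₀⟩ := hB
    set η : SCon (A.prod B) := SCon.prodCon (⊥ : SCon A) (⊤ : SCon B) with hη
    have hηle : η ≤ SCon.prodCon α (⊤ : SCon B) := by
      intro x y hxy
      exact ⟨(SCon.bot_r_iff.mp hxy.1) ▸ α.iseqv.refl _, SCon.top_r _ _⟩
    set β : SCon (A.prod B) := θ ⊔ η with hβ
    haveI := hmod
    have hmodeq : (η ⊔ θ) ⊓ SCon.prodCon α (⊤ : SCon B) = η := by
      rw [sup_inf_assoc_of_le θ hηle, hθ, sup_bot_eq]
    -- the congruence on A induced by β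
    have hηβ : η ≤ β := le_sup_right
    have hθβ : θ ≤ β := le_sup_left
    have hβη : ∀ x y : (A.prod B).carrier, β.r x y → (SCon.prodCon α (⊤ : SCon B)).r x y →
        x.1 = y.1 := by
      intro x y h1 h2
      have : η.r x y :=
        hmodeq ▸ (SCon.inf_r _ _ _ _).mpr ⟨sup_comm θ η ▸ h1, h2⟩
      exact SCon.bot_r_iff.mp this.1
    let ψ : SCon A :=
      { r := fun a a' => ∃ b b' : B.carrier, β.r (a, b) (a', b')
        iseqv := by
          refine ⟨fun a => ⟨b₀, b₀, β.iseqv.refl _⟩, ?_, ?_⟩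
          · rintro a a' ⟨b, b', h⟩; exact ⟨b', b, β.iseqv.symm h⟩
          · rintro a a' a'' ⟨b, b', h⟩ ⟨c, c', h'⟩
            refine ⟨b, c', β.iseqv.trans h (β.iseqv.trans ?_ h')⟩
            exact hηβ _ _ ⟨(⊥ : SCon A).iseqv.refl _, SCon.top_r _ _⟩
        compat := by
          intro o x y h
          choose b b' hb using h
          refine ⟨B.interp o b, B.interp o b', ?_⟩
          exact β.compat o (fun i => (x i, b i)) (fun i => (y i, b' i)) hb }
    have hψ : ψ = ⊥ := by
      apply hα
      apply le_antisymm _ bot_le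
      intro a a' hmem
      obtain ⟨⟨b, b', h⟩, hα'⟩ := (SCon.inf_r _ _ _ _).mp hmem
      have : β.r (a, b) (a', b) :=
        β.iseqv.trans h (hηβ _ _ ⟨(⊥ : SCon A).iseqv.refl _, SCon.top_r _ _⟩)
      have := hβη (a, b) (a', b) this ⟨hα', SCon.top_r _ _⟩
      exact SCon.bot_r_iff.mpr this
    -- now θ ≤ η, hence θ ≤ θ ⊓ (α × ⊤) = ⊥
    apply le_antisymm _ bot_le
    intro x y hxy
    have hx1 : x.1 = y.1 := by
      have : ψ.r x.1 y.1 := ⟨x.2, y.2, hθβ _ _ hxy⟩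
      rw [hψ] at this
      exact SCon.bot_r_iff.mp this
    have hxη : (SCon.prodCon α (⊤ : SCon B)).r x y := hηle x y ⟨SCon.bot_r_iff.mpr hx1, SCon.top_r _ _⟩
    have : (θ ⊓ SCon.prodCon α (⊤ : SCon B)).r x y := (SCon.inf_r _ _ _ _).mpr ⟨hxy, hxη⟩
    rw [hθ] at this
    exact this
  · -- B empty: every congruence on A × B is ⊥
    apply le_antisymm _ bot_le
    intro x y _
    exact absurd ⟨x.2⟩ hB
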